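/- For odd n ≥ 11, the vectors E_{n,(n-9)/2} and E_{n,(n-7)/2} are both the zero vector; equivalently, P_{n,(n-9)/2} = -Q_{n,(n-9)/2} and P_{n,(n-7)/2} = -Q_{n,(n-7)/2}. -/
import Mathlib


open Finset Matrix

/-- The vector `P_{n,λ}`; the vertex `v : Fin n × Fin n` has 1-based coordinates
`(i, j) = (v.1 + 1, v.2 + 1)`, `i ⊖ j = |i - j|`, `i ⊕ j = |i + j - (n+1)|`, and
`k = (λ + 4) - (n-1)/2`. -/
noncomputable def Pvec (n : ℕ) (lam : ℤ) (v : Fin n × Fin n) : ℝ :=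
  let i : ℤ := (v.1 : ℤ) + 1
  let j : ℤ := (v.2 : ℤ) + 1
  let k : ℤ := (lam + 4) - ((n : ℤ) - 1) / 2
  if |i - j| = (n : ℤ) - (lam + 4) then (k : ℝ)
  else if |i - j| < (n : ℤ) - (lam + 4) ∧ |i + j - ((n : ℤ) + 1)| < lam + 4 ∧
      |i - j| % 2 = ((n : ℤ) - (lam + 4)) % 2 then 1
  else 0

/-- The vector `Q_{n,λ}`. -/
noncomputable def Qvec (n : ℕ) (lam : ℤ) (v : Fin n × Fin n) : ℝ :=
  let i : ℤ := (v.1 : ℤ) + 1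
  let j : ℤ := (v.2 : ℤ) + 1
  let k : ℤ := (lam + 4) - ((n : ℤ) - 1) / 2
  if |i + j - ((n : ℤ) + 1)| = (n : ℤ) - (lam + 4) then (-k : ℝ)
  else if |i + j - ((n : ℤ) + 1)| < (n : ℤ) - (lam + 4) ∧ |i - j| < lam + 4 ∧
      |i + j - ((n : ℤ) + 1)| % 2 = ((n : ℤ) - (lam + 4)) % 2 then -1
  else 0

/-- The vector `E_{n,λ} = P_{n,λ} + Q_{n,λ}`. -/
noncomputable def Evec (n : ℕ) (lam : ℤ) (v : Fin n × Fin n) : ℝ :=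
  Pvec n lam v + Qvec n lam v

set_option maxHeartbeats 2000000 in
lemma PQkey (n : ℕ) (lam : ℤ) (hn : 11 ≤ n) (hodd : Odd n)
    (hlam : lam = ((n : ℤ) - 9) / 2 ∨ lam = ((n : ℤ) - 7) / 2)
    (v : Fin n × Fin n) : Pvec n lam v = -Qvec n lam v := by
  obtain ⟨m, hm⟩ := hodd
  have h2 : (n : ℤ) % 2 = 1 := by omega
  have hn' : (11 : ℤ) ≤ (n : ℤ) := by exact_mod_cast hn
  have hi2 : ((v.1 : ℤ)) < n := by exact_mod_cast v.1.isLt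
  have hj2 : ((v.2 : ℤ)) < n := by exact_mod_cast v.2.isLt
  have hi1 : (0 : ℤ) ≤ (v.1 : ℤ) := by positivity
  have hj1 : (0 : ℤ) ≤ (v.2 : ℤ) := by positivity
  simp only [Pvec, Qvec]
  rcases abs_cases ((v.1 : ℤ) + 1 - ((v.2 : ℤ) + 1)) with ⟨h3, h4⟩ | ⟨h3, h4⟩ <;>
  rcases abs_cases ((v.1 : ℤ) + 1 + ((v.2 : ℤ) + 1) - ((n : ℤ) + 1)) with ⟨h5, h6⟩ | ⟨h5, h6⟩ <;>
  rw [h3, h5] <;>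
  split_ifs <;>
  first
    | (exfalso; omega)
    | (have hk : (lam + 4) - ((n : ℤ) - 1) / 2 = 1 := by omega
       rw [hk]; norm_num)
    | (have hk : (lam + 4) - ((n : ℤ) - 1) / 2 = 0 := by omega
       rw [hk]; norm_num)
    | (norm_num; done)
    | ring

/-- for odd `n ≥ 11`, `E_{n,(n-9)/2}` and `E_{n,(n-7)/2}` are zero;
equivalently `P = -Q` for these two values of `λ`. -/
theorem stmt8 (n : ℕ) (hn : 11 ≤ n) (hodd : Odd n) :
    (∀ v : Fin n × Fin n, Evec n (((n : ℤ) - 9) / 2) v = 0) ∧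
    (∀ v : Fin n × Fin n, Evec n (((n : ℤ) - 7) / 2) v = 0) ∧
    (∀ v : Fin n × Fin n, Pvec n (((n : ℤ) - 9) / 2) v = -Qvec n (((n : ℤ) - 9) / 2) v) ∧
    (∀ v : Fin n × Fin n, Pvec n (((n : ℤ) - 7) / 2) v = -Qvec n (((n : ℤ) - 7) / 2) v) := by
  have h9 := fun v => PQkey n (((n : ℤ) - 9) / 2) hn hodd (Or.inl rfl) v
  have h7 := fun v => PQkey n (((n : ℤ) - 7) / 2) hn hodd (Or.inr rfl) v
  refine ⟨fun v => ?_, fun v => ?_, h9, h7⟩ <;> simp [Evec, h9, h7]
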